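/- arXiv:math/9604220 — 2 statements merged into one kernel-verified Lean document; each statement's English description precedes it below -/
import Mathlib

section
/- For every p-Banach operator ideal (A, **A**) (0 < p ≤ 1), the conjugate ideal of A dominates the adjoint: A^Δ ⊆ A* with **A***(T) ≤ **A**^Δ(T) for all T; consequently A^{*Δ} ⊆ A^{ΔΔ} with **A**^{ΔΔ}(T) ≤ **A**^{*Δ}(T). -/
noncomputable section

open scoped Classical

universe u

/-- A bundled Banach space over `ℝ`. -/
structure BanachSpc : Type (u + 1) where
  carrier : Type u
  [grp : NormedAddCommGroup carrier]
  [mod : NormedSpace ℝ carrier]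
  [cpl : CompleteSpace carrier]

attribute [instance] BanachSpc.grp BanachSpc.mod BanachSpc.cpl

instance : CoeSort BanachSpc.{u} (Type u) := ⟨BanachSpc.carrier⟩

/-- The data of an operator ideal: a class of operators together with an ideal "norm". -/
structure OperatorIdeal : Type (u + 1) where
  mem : ∀ (E F : BanachSpc.{u}), (E.carrier →L[ℝ] F.carrier) → Prop
  nrm : ∀ (E F : BanachSpc.{u}), (E.carrier →L[ℝ] F.carrier) → ℝ

/-- A finite rank (finite) operator. -/
def FinRankOp {E F : BanachSpc.{u}} (T : E.carrier →L[ℝ] F.carrier) : Prop :=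
  FiniteDimensional ℝ (LinearMap.range (T : E.carrier →ₗ[ℝ] F.carrier))

/-- The trace of a (finite rank) operator, computed as the trace of the induced
endomorphism of its range. -/
noncomputable def fTrace {E : BanachSpc.{u}} (T : E.carrier →L[ℝ] E.carrier) : ℝ :=
  LinearMap.trace ℝ (LinearMap.range (T : E.carrier →ₗ[ℝ] E.carrier))
    ((T : E.carrier →ₗ[ℝ] E.carrier).restrict
      (p := LinearMap.range (T : E.carrier →ₗ[ℝ] E.carrier))
      (q := LinearMap.range (T : E.carrier →ₗ[ℝ] E.carrier))
      (fun x _ => LinearMap.mem_range_self _ x))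

/-- `IsPBanachIdeal p A` : `A` is a `p`-Banach operator ideal (`0 < p ≤ 1`). -/
structure IsPBanachIdeal (p : ℝ) (A : OperatorIdeal.{u}) : Prop where
  p_pos : 0 < p
  p_le_one : p ≤ 1
  finrank_mem : ∀ (E F : BanachSpc.{u}) (T : E.carrier →L[ℝ] F.carrier), FinRankOp T → A.mem E F T
  nonneg : ∀ (E F : BanachSpc.{u}) (T : E.carrier →L[ℝ] F.carrier), 0 ≤ A.nrm E F T
  opnorm_le : ∀ (E F : BanachSpc.{u}) (T : E.carrier →L[ℝ] F.carrier), A.mem E F T → ‖T‖ ≤ A.nrm E F T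
  rank_one_le : ∀ (E F : BanachSpc.{u}) (a : E.carrier →L[ℝ] ℝ) (y : F.carrier),
    A.nrm E F (a.smulRight y) ≤ ‖a‖ * ‖y‖
  smul_mem : ∀ (E F : BanachSpc.{u}) (c : ℝ) (T : E.carrier →L[ℝ] F.carrier),
    A.mem E F T → A.mem E F (c • T)
  nrm_smul : ∀ (E F : BanachSpc.{u}) (c : ℝ) (T : E.carrier →L[ℝ] F.carrier),
    A.mem E F T → A.nrm E F (c • T) = |c| * A.nrm E F T
  add_mem : ∀ (E F : BanachSpc.{u}) (S T : E.carrier →L[ℝ] F.carrier),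
    A.mem E F S → A.mem E F T → A.mem E F (S + T)
  p_triangle : ∀ (E F : BanachSpc.{u}) (S T : E.carrier →L[ℝ] F.carrier),
    A.mem E F S → A.mem E F T →
    A.nrm E F (S + T) ^ p ≤ A.nrm E F S ^ p + A.nrm E F T ^ p
  comp_mem : ∀ (E F G H : BanachSpc.{u}) (R : E.carrier →L[ℝ] F.carrier)
    (T : F.carrier →L[ℝ] G.carrier) (S : G.carrier →L[ℝ] H.carrier),
    A.mem F G T → A.mem E H (S.comp (T.comp R))
  comp_le : ∀ (E F G H : BanachSpc.{u}) (R : E.carrier →L[ℝ] F.carrier)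
    (T : F.carrier →L[ℝ] G.carrier) (S : G.carrier →L[ℝ] H.carrier),
    A.mem F G T → A.nrm E H (S.comp (T.comp R)) ≤ ‖S‖ * A.nrm F G T * ‖R‖
  complete : ∀ (E F : BanachSpc.{u}) (f : ℕ → (E.carrier →L[ℝ] F.carrier)),
    (∀ n, A.mem E F (f n)) →
    (∀ ε > (0 : ℝ), ∃ N : ℕ, ∀ m ≥ N, ∀ n ≥ N, A.nrm E F (f m - f n) ^ p < ε) →
    ∃ T, A.mem E F T ∧ ∀ ε > (0 : ℝ), ∃ N : ℕ, ∀ n ≥ N, A.nrm E F (f n - T) ^ p < ε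

namespace OperatorIdeal

/-- The product ideal `A ∘ B`. -/
def prod (A B : OperatorIdeal.{u}) : OperatorIdeal.{u} where
  mem E F T := ∃ (G : BanachSpc.{u}) (R : E.carrier →L[ℝ] G.carrier)
    (S : G.carrier →L[ℝ] F.carrier), B.mem E G R ∧ A.mem G F S ∧ T = S.comp R
  nrm E F T := sInf { r : ℝ | ∃ (G : BanachSpc.{u}) (R : E.carrier →L[ℝ] G.carrier)
    (S : G.carrier →L[ℝ] F.carrier), B.mem E G R ∧ A.mem G F S ∧ T = S.comp R ∧
    r = A.nrm G F S * B.nrm E G R }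

/-- The right-`B`-quotient `A ∘ B⁻¹`. -/
def rightQuotient (A B : OperatorIdeal.{u}) : OperatorIdeal.{u} where
  mem E F T := ∀ (G : BanachSpc.{u}) (S : G.carrier →L[ℝ] E.carrier),
    B.mem G E S → A.mem G F (T.comp S)
  nrm E F T := sSup { r : ℝ | ∃ (G : BanachSpc.{u}) (S : G.carrier →L[ℝ] E.carrier),
    B.mem G E S ∧ B.nrm G E S = 1 ∧ r = A.nrm G F (T.comp S) }

/-- The conjugate ideal `A^Δ`, defined by trace duality against finite rank operators. -/
def conj (A : OperatorIdeal.{u}) : OperatorIdeal.{u} where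
  mem E F T := ∃ c : ℝ, 0 ≤ c ∧ ∀ L : F.carrier →L[ℝ] E.carrier, FinRankOp L →
    |fTrace (T.comp L)| ≤ c * A.nrm F E L
  nrm E F T := sInf { c : ℝ | 0 ≤ c ∧ ∀ L : F.carrier →L[ℝ] E.carrier, FinRankOp L →
    |fTrace (T.comp L)| ≤ c * A.nrm F E L }

/-- The adjoint ideal `A*`. -/
def adj (A : OperatorIdeal.{u}) : OperatorIdeal.{u} where
  mem E F T := ∃ c : ℝ, 0 ≤ c ∧ ∀ (E₀ F₀ : BanachSpc.{u})
    (B : E₀.carrier →L[ℝ] E.carrier) (S : F₀.carrier →L[ℝ] E₀.carrier)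
    (A₀ : F.carrier →L[ℝ] F₀.carrier), FinRankOp B → FinRankOp A₀ → A.mem F₀ E₀ S →
    |fTrace (T.comp (B.comp (S.comp A₀)))| ≤ c * ‖B‖ * A.nrm F₀ E₀ S * ‖A₀‖
  nrm E F T := sInf { c : ℝ | 0 ≤ c ∧ ∀ (E₀ F₀ : BanachSpc.{u})
    (B : E₀.carrier →L[ℝ] E.carrier) (S : F₀.carrier →L[ℝ] E₀.carrier)
    (A₀ : F.carrier →L[ℝ] F₀.carrier), FinRankOp B → FinRankOp A₀ → A.mem F₀ E₀ S →
    |fTrace (T.comp (B.comp (S.comp A₀)))| ≤ c * ‖B‖ * A.nrm F₀ E₀ S * ‖A₀‖ }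

/-- The ideal of approximable operators, with the operator norm. -/
def approx : OperatorIdeal.{u} where
  mem E F T := ∀ ε > (0 : ℝ), ∃ L : E.carrier →L[ℝ] F.carrier, FinRankOp L ∧ ‖T - L‖ < ε
  nrm E F T := ‖T‖

/-- The minimal kernel `A^min = F̄ ∘ A ∘ F̄`. -/
def minKer (A : OperatorIdeal.{u}) : OperatorIdeal.{u} :=
  OperatorIdeal.prod approx (OperatorIdeal.prod A approx)

/-- The injective hull `A^inj` : `T ∈ A^inj` iff `J ∘ T ∈ A` for some metric injection `J`,
with the induced infimum norm. -/
def injHull (A : OperatorIdeal.{u}) : OperatorIdeal.{u} where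
  mem E F T := ∃ (G : BanachSpc.{u}) (J : F.carrier →L[ℝ] G.carrier),
    Isometry J ∧ A.mem E G (J.comp T)
  nrm E F T := sInf { r : ℝ | ∃ (G : BanachSpc.{u}) (J : F.carrier →L[ℝ] G.carrier),
    Isometry J ∧ A.mem E G (J.comp T) ∧ r = A.nrm E G (J.comp T) }

end OperatorIdeal

/-- A finite dimensional subspace of a Banach space, as a Banach space. -/
def SubBanach (F : BanachSpc.{u}) (N : Submodule ℝ F.carrier)
    (hN : FiniteDimensional ℝ ↥N) : BanachSpc.{u} :=
  letI := hN; ⟨↥N⟩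

/-- A quotient of a Banach space by a closed subspace, as a Banach space. -/
def QuotBanach (E : BanachSpc.{u}) (K : Submodule ℝ E.carrier)
    (hK : IsClosed (K : Set E.carrier)) : BanachSpc.{u} :=
  letI := hK; ⟨E.carrier ⧸ K⟩

/-- The dual of a Banach space, as a Banach space. -/
def DualB (F : BanachSpc.{u}) : BanachSpc.{u} := ⟨StrongDual ℝ F.carrier⟩

/-- The bidual of a Banach space, as a Banach space. -/
def BidualB (F : BanachSpc.{u}) : BanachSpc.{u} := DualB (DualB F)

/-- Left accessibility of an operator ideal. -/
def LeftAccessible (A : OperatorIdeal.{u}) : Prop :=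
  ∀ (E N : BanachSpc.{u}), FiniteDimensional ℝ N.carrier →
  ∀ (T : E.carrier →L[ℝ] N.carrier), ∀ ε > (0 : ℝ),
  ∃ (K : Submodule ℝ E.carrier) (hK : IsClosed (K : Set E.carrier))
    (_ : FiniteDimensional ℝ (E.carrier ⧸ K))
    (S : (QuotBanach E K hK).carrier →L[ℝ] N.carrier),
    (∀ x : E.carrier, T x = S (Submodule.Quotient.mk x)) ∧
    A.nrm (QuotBanach E K hK) N S ≤ (1 + ε) * A.nrm E N T

/-- Right accessibility of an operator ideal. -/
def RightAccessible (A : OperatorIdeal.{u}) : Prop :=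
  ∀ (M F : BanachSpc.{u}), FiniteDimensional ℝ M.carrier →
  ∀ (T : M.carrier →L[ℝ] F.carrier), ∀ ε > (0 : ℝ),
  ∃ (N : Submodule ℝ F.carrier) (hN : FiniteDimensional ℝ ↥N)
    (S : M.carrier →L[ℝ] (SubBanach F N hN).carrier),
    (∀ x : M.carrier, T x = N.subtype (S x)) ∧
    A.nrm M (SubBanach F N hN) S ≤ (1 + ε) * A.nrm M F T

/-- Total accessibility of an operator ideal. -/
def TotallyAccessible (A : OperatorIdeal.{u}) : Prop :=
  ∀ (E F : BanachSpc.{u}) (T : E.carrier →L[ℝ] F.carrier), FinRankOp T → ∀ ε > (0 : ℝ),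
  ∃ (K : Submodule ℝ E.carrier) (hK : IsClosed (K : Set E.carrier))
    (_ : FiniteDimensional ℝ (E.carrier ⧸ K))
    (N : Submodule ℝ F.carrier) (hN : FiniteDimensional ℝ ↥N)
    (S : (QuotBanach E K hK).carrier →L[ℝ] (SubBanach F N hN).carrier),
    (∀ x : E.carrier, T x = N.subtype (S (Submodule.Quotient.mk x))) ∧
    A.nrm (QuotBanach E K hK) (SubBanach F N hN) S ≤ (1 + ε) * A.nrm E F T

/-- The `A`-extension property. -/
def ExtensionProperty (A : OperatorIdeal.{u}) : Prop :=
  ∀ ε > (0 : ℝ), ∀ (E G F : BanachSpc.{u}) (J : E.carrier →L[ℝ] G.carrier), Isometry J →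
  ∀ (T : E.carrier →L[ℝ] F.carrier), A.mem E F T →
  ∃ Tt : G.carrier →L[ℝ] F.carrier, A.mem G F Tt ∧ (∀ x : E.carrier, T x = Tt (J x)) ∧
    A.nrm G F Tt ≤ (1 + ε) * A.nrm E F T

/-- The principle of `A`-local reflexivity (`A`-LRP). -/
def LRPholds (A : OperatorIdeal.{u}) : Prop :=
  ∀ (M F : BanachSpc.{u}), FiniteDimensional ℝ M.carrier →
  ∀ (N : Submodule ℝ (StrongDual ℝ F.carrier)), FiniteDimensional ℝ ↥N →
  ∀ (T : M.carrier →L[ℝ] StrongDual ℝ (StrongDual ℝ F.carrier)), ∀ ε > (0 : ℝ),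
  ∃ S : M.carrier →L[ℝ] F.carrier,
    A.nrm M F S ≤ (1 + ε) * (A.adj.adj).nrm M (BidualB F) T ∧
    (∀ (x : M.carrier) (b : ↥N), (b : StrongDual ℝ F.carrier) (S x) = T x b) ∧
    (∀ x : M.carrier, T x ∈ Set.range (NormedSpace.inclusionInDoubleDual ℝ F.carrier) →
      NormedSpace.inclusionInDoubleDual ℝ F.carrier (S x) = T x)

/-- `A` is a maximal Banach ideal: `A = A** = (A*)*` isometrically. -/
def IsMaximalIdeal (A : OperatorIdeal.{u}) : Prop :=
  ∀ (E F : BanachSpc.{u}) (T : E.carrier →L[ℝ] F.carrier),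
    (A.mem E F T ↔ (A.adj.adj).mem E F T) ∧ A.nrm E F T = (A.adj.adj).nrm E F T


section Aux

set_option synthInstance.maxHeartbeats 1000000
set_option maxHeartbeats 1600000

open LinearMap

/-- `fTrace` can be computed on any finite-dimensional subspace containing the range. -/
lemma fTrace_eq_trace_restrict {E : BanachSpc.{u}} (S : E.carrier →L[ℝ] E.carrier)
    (V : Submodule ℝ E.carrier) [FiniteDimensional ℝ V]
    (hr : LinearMap.range (S : E.carrier →ₗ[ℝ] E.carrier) ≤ V) :
    fTrace S = LinearMap.trace ℝ V ((S : E.carrier →ₗ[ℝ] E.carrier).restrict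
      (p := V) (q := V) (fun x _ => hr (LinearMap.mem_range_self _ x))) := by
  classical
  haveI : FiniteDimensional ℝ (LinearMap.range (S : E.carrier →ₗ[ℝ] E.carrier)) :=
    Submodule.finiteDimensional_of_le hr
  let j : (LinearMap.range (S : E.carrier →ₗ[ℝ] E.carrier)) →ₗ[ℝ] V :=
    Submodule.inclusion hr
  let f : V →ₗ[ℝ] (LinearMap.range (S : E.carrier →ₗ[ℝ] E.carrier)) :=
    ((S : E.carrier →ₗ[ℝ] E.carrier).comp V.subtype).codRestrict _
      (fun x => LinearMap.mem_range_self (S : E.carrier →ₗ[ℝ] E.carrier) (x : E.carrier))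
  have h1 : (S : E.carrier →ₗ[ℝ] E.carrier).restrict
      (p := LinearMap.range (S : E.carrier →ₗ[ℝ] E.carrier))
      (q := LinearMap.range (S : E.carrier →ₗ[ℝ] E.carrier))
      (fun x _ => LinearMap.mem_range_self _ x)
      = f ∘ₗ j := by
    ext x
    rfl
  have h2 : (S : E.carrier →ₗ[ℝ] E.carrier).restrict (p := V) (q := V)
      (fun x _ => hr (LinearMap.mem_range_self _ x))
      = j ∘ₗ f := by
    ext x
    rfl
  unfold fTrace
  rw [h1, h2, LinearMap.trace_comp_comm']

/-- Composing with a finite-rank operator on the left gives a finite-rank operator. -/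
lemma finRankOp_comp_left {E F G : BanachSpc.{u}} (T : F.carrier →L[ℝ] G.carrier)
    (R : E.carrier →L[ℝ] F.carrier) (hT : FinRankOp T) : FinRankOp (T.comp R) := by
  unfold FinRankOp at *
  haveI := hT
  have hle : LinearMap.range ((T.comp R : E.carrier →L[ℝ] G.carrier) :
      E.carrier →ₗ[ℝ] G.carrier) ≤ LinearMap.range (T : F.carrier →ₗ[ℝ] G.carrier) := by
    rintro y ⟨x, rfl⟩
    exact LinearMap.mem_range_self _ (R x)
  exact Submodule.finiteDimensional_of_le hle

/-- Trace bound: for finite-rank `L`, `|tr (L ∘ M)| ≤ c ‖M‖` uniformly in `M`. -/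
lemma fTrace_comp_bound {E F : BanachSpc.{u}} (L : F.carrier →L[ℝ] E.carrier)
    (hL : FinRankOp L) :
    ∃ c : ℝ, 0 ≤ c ∧ ∀ M : E.carrier →L[ℝ] F.carrier,
      |fTrace (L.comp M)| ≤ c * ‖M‖ := by
  classical
  unfold FinRankOp at hL
  set V := LinearMap.range (L : F.carrier →ₗ[ℝ] E.carrier) with hV
  haveI : FiniteDimensional ℝ V := hL
  let b := Module.finBasis ℝ V
  let φ : Fin (Module.finrank ℝ V) → (V →L[ℝ] ℝ) :=
    fun i => LinearMap.toContinuousLinearMap (b.coord i)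
  refine ⟨∑ i, ‖φ i‖ * ‖L‖ * ‖(b i : E.carrier)‖, ?_, ?_⟩
  · exact Finset.sum_nonneg fun i _ => by positivity
  intro M
  have hr : LinearMap.range ((L.comp M : E.carrier →L[ℝ] E.carrier) :
      E.carrier →ₗ[ℝ] E.carrier) ≤ V := by
    rintro y ⟨x, rfl⟩
    exact LinearMap.mem_range_self _ (M x)
  rw [fTrace_eq_trace_restrict (L.comp M) V hr]
  set g := ((L.comp M : E.carrier →L[ℝ] E.carrier) : E.carrier →ₗ[ℝ] E.carrier).restrict
      (p := V) (q := V) (fun x _ => hr (LinearMap.mem_range_self _ x)) with hg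
  rw [LinearMap.trace_eq_matrix_trace ℝ b g, Matrix.trace]
  have hdiag : ∀ i, (LinearMap.toMatrix b b g).diag i = b.coord i (g (b i)) := by
    intro i
    simp [Matrix.diag, LinearMap.toMatrix_apply, Module.Basis.coord_apply]
  calc |∑ i, (LinearMap.toMatrix b b g).diag i|
      ≤ ∑ i, |(LinearMap.toMatrix b b g).diag i| := Finset.abs_sum_le_sum_abs _ _
    _ ≤ ∑ i, ‖φ i‖ * ‖L‖ * ‖(b i : E.carrier)‖ * ‖M‖ := by
        refine Finset.sum_le_sum fun i _ => ?_
        rw [hdiag i]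
        have h1 : |b.coord i (g (b i))| = |φ i (g (b i))| := rfl
        have h2 : |φ i (g (b i))| ≤ ‖φ i‖ * ‖g (b i)‖ := by
          simpa [Real.norm_eq_abs] using (φ i).le_opNorm (g (b i))
        have h3 : ‖g (b i)‖ = ‖L (M (b i))‖ := rfl
        have h4 : ‖L (M (b i : E.carrier))‖ ≤ ‖L‖ * (‖M‖ * ‖(b i : E.carrier)‖) :=
          le_trans (L.le_opNorm _) (by
            have := M.le_opNorm (b i : E.carrier)
            nlinarith [norm_nonneg L])
        rw [h1]
        calc |φ i (g (b i))| ≤ ‖φ i‖ * ‖g (b i)‖ := h2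
          _ = ‖φ i‖ * ‖L (M (b i : E.carrier))‖ := by rw [h3]
          _ ≤ ‖φ i‖ * (‖L‖ * (‖M‖ * ‖(b i : E.carrier)‖)) := by
              exact mul_le_mul_of_nonneg_left h4 ((φ i).opNorm_nonneg)
          _ = ‖φ i‖ * ‖L‖ * ‖(b i : E.carrier)‖ * ‖M‖ := by ring
    _ = (∑ i, ‖φ i‖ * ‖L‖ * ‖(b i : E.carrier)‖) * ‖M‖ := by rw [Finset.sum_mul]

/-- Every finite-rank operator belongs to `A^Δ`. -/
lemma finRank_mem_conj (p : ℝ) (A : OperatorIdeal.{u}) (hA : IsPBanachIdeal p A)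
    {E F : BanachSpc.{u}} (L : F.carrier →L[ℝ] E.carrier) (hL : FinRankOp L) :
    A.conj.mem F E L := by
  obtain ⟨c, hc0, hc⟩ := fTrace_comp_bound L hL
  refine ⟨c, hc0, fun M hM => ?_⟩
  calc |fTrace (L.comp M)| ≤ c * ‖M‖ := hc M
    _ ≤ c * A.nrm E F M :=
        mul_le_mul_of_nonneg_left (hA.opnorm_le E F M (hA.finrank_mem E F M hM)) hc0

/-- The set of constants in the definition of `A^Δ` is contained in that of `A*`. -/
lemma conjSet_subset_adjSet (p : ℝ) (A : OperatorIdeal.{u}) (hA : IsPBanachIdeal p A)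
    {E F : BanachSpc.{u}} (T : E.carrier →L[ℝ] F.carrier) {c : ℝ}
    (hc0 : 0 ≤ c)
    (hc : ∀ L : F.carrier →L[ℝ] E.carrier, FinRankOp L →
      |fTrace (T.comp L)| ≤ c * A.nrm F E L) :
    ∀ (E₀ F₀ : BanachSpc.{u}) (B : E₀.carrier →L[ℝ] E.carrier)
      (S : F₀.carrier →L[ℝ] E₀.carrier) (A₀ : F.carrier →L[ℝ] F₀.carrier),
      FinRankOp B → FinRankOp A₀ → A.mem F₀ E₀ S →
      |fTrace (T.comp (B.comp (S.comp A₀)))| ≤ c * ‖B‖ * A.nrm F₀ E₀ S * ‖A₀‖ := by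
  intro E₀ F₀ B S A₀ hB _hA₀ hS
  have hfin : FinRankOp (B.comp (S.comp A₀)) := finRankOp_comp_left B (S.comp A₀) hB
  calc |fTrace (T.comp (B.comp (S.comp A₀)))|
      ≤ c * A.nrm F E (B.comp (S.comp A₀)) := hc _ hfin
    _ ≤ c * (‖B‖ * A.nrm F₀ E₀ S * ‖A₀‖) :=
        mul_le_mul_of_nonneg_left (hA.comp_le F F₀ E₀ E A₀ S B hS) hc0
    _ = c * ‖B‖ * A.nrm F₀ E₀ S * ‖A₀‖ := by ring

end Aux

/-- `A^Δ ⊆ A*` with `𝐀*(T) ≤ 𝐀^Δ(T)`; consequently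
`A^{*Δ} ⊆ A^{ΔΔ}` with `𝐀^{ΔΔ}(T) ≤ 𝐀^{*Δ}(T)`. -/
theorem conj_subset_adj (p : ℝ) (A : OperatorIdeal.{u}) (hA : IsPBanachIdeal p A) :
    (∀ (E F : BanachSpc.{u}) (T : E.carrier →L[ℝ] F.carrier),
      A.conj.mem E F T → A.adj.mem E F T ∧ A.adj.nrm E F T ≤ A.conj.nrm E F T) ∧
    (∀ (E F : BanachSpc.{u}) (T : E.carrier →L[ℝ] F.carrier),
      (A.adj.conj).mem E F T →
        (A.conj.conj).mem E F T ∧ (A.conj.conj).nrm E F T ≤ (A.adj.conj).nrm E F T) := by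
  have key1 : ∀ (E F : BanachSpc.{u}) (T : E.carrier →L[ℝ] F.carrier),
      { c : ℝ | 0 ≤ c ∧ ∀ L : F.carrier →L[ℝ] E.carrier, FinRankOp L →
        |fTrace (T.comp L)| ≤ c * A.nrm F E L } ⊆
      { c : ℝ | 0 ≤ c ∧ ∀ (E₀ F₀ : BanachSpc.{u})
        (B : E₀.carrier →L[ℝ] E.carrier) (S : F₀.carrier →L[ℝ] E₀.carrier)
        (A₀ : F.carrier →L[ℝ] F₀.carrier), FinRankOp B → FinRankOp A₀ → A.mem F₀ E₀ S →
        |fTrace (T.comp (B.comp (S.comp A₀)))| ≤ c * ‖B‖ * A.nrm F₀ E₀ S * ‖A₀‖ } := by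
    intro E F T c hc
    exact ⟨hc.1, conjSet_subset_adjSet p A hA T hc.1 hc.2⟩
  have part1 : ∀ (E F : BanachSpc.{u}) (T : E.carrier →L[ℝ] F.carrier),
      A.conj.mem E F T → A.adj.mem E F T ∧ A.adj.nrm E F T ≤ A.conj.nrm E F T := by
    intro E F T hT
    obtain ⟨c, hc0, hc⟩ := hT
    constructor
    · exact ⟨c, (key1 E F T ⟨hc0, hc⟩).1, (key1 E F T ⟨hc0, hc⟩).2⟩
    · exact csInf_le_csInf ⟨0, fun x hx => hx.1⟩ ⟨c, hc0, hc⟩ (key1 E F T)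
  refine ⟨part1, ?_⟩
  -- for all finite rank L, A.adj.nrm ≤ A.conj.nrm
  have hnrm : ∀ (E F : BanachSpc.{u}) (L : F.carrier →L[ℝ] E.carrier), FinRankOp L →
      A.adj.nrm F E L ≤ A.conj.nrm F E L := by
    intro E F L hL
    exact (part1 F E L (finRank_mem_conj p A hA L hL)).2
  have key2 : ∀ (E F : BanachSpc.{u}) (T : E.carrier →L[ℝ] F.carrier),
      { c : ℝ | 0 ≤ c ∧ ∀ L : F.carrier →L[ℝ] E.carrier, FinRankOp L →
        |fTrace (T.comp L)| ≤ c * A.adj.nrm F E L } ⊆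
      { c : ℝ | 0 ≤ c ∧ ∀ L : F.carrier →L[ℝ] E.carrier, FinRankOp L →
        |fTrace (T.comp L)| ≤ c * A.conj.nrm F E L } := by
    intro E F T c hc
    refine ⟨hc.1, fun L hL => le_trans (hc.2 L hL) ?_⟩
    exact mul_le_mul_of_nonneg_left (hnrm E F L hL) hc.1
  intro E F T hT
  obtain ⟨c, hc0, hc⟩ := hT
  constructor
  · exact ⟨c, (key2 E F T ⟨hc0, hc⟩).1, (key2 E F T ⟨hc0, hc⟩).2⟩
  · exact csInf_le_csInf ⟨0, fun x hx => hx.1⟩ ⟨c, hc0, hc⟩ (key2 E F T)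
end
end

section
/- Let (A, **A**) be a left-accessible Banach operator ideal. Then the A^Δ-local reflexivity principle holds if and only if the A*-local reflexivity principle holds. -/
set_option maxHeartbeats 1000000
set_option synthInstance.maxHeartbeats 1000000


noncomputable section

open scoped Classical

universe u

/-! ### Auxiliary lemmas for the proof -/

section AuxLemmas

open ContinuousLinearMap

/-- Trace of the restriction to the range equals the trace of the restriction to any
finite-dimensional submodule containing the range. -/
lemma trace_restrict_eq_of_le {Ec : Type u} [AddCommGroup Ec] [Module ℝ Ec]
    (T : Ec →ₗ[ℝ] Ec) (W : Submodule ℝ Ec) (hW : LinearMap.range T ≤ W)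
    [FiniteDimensional ℝ ↥W] [FiniteDimensional ℝ ↥(LinearMap.range T)] :
    LinearMap.trace ℝ (LinearMap.range T)
      (T.restrict (p := LinearMap.range T) (q := LinearMap.range T)
        (fun x _ => LinearMap.mem_range_self _ x)) =
    LinearMap.trace ℝ W
      (T.restrict (p := W) (q := W) (fun x _ => hW (LinearMap.mem_range_self _ x))) := by
  set f₁ : ↥W →ₗ[ℝ] ↥(LinearMap.range T) :=
    LinearMap.codRestrict (LinearMap.range T) (T.domRestrict W)
      (fun x => LinearMap.mem_range_self _ _) with hf₁
  set f₂ : ↥(LinearMap.range T) →ₗ[ℝ] ↥W := Submodule.inclusion hW with hf₂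
  have h₁ : f₁ ∘ₗ f₂ =
      T.restrict (p := LinearMap.range T) (q := LinearMap.range T)
        (fun x _ => LinearMap.mem_range_self _ x) := by
    refine LinearMap.ext fun x => Subtype.ext ?_
    rfl
  have h₂ : f₂ ∘ₗ f₁ =
      T.restrict (p := W) (q := W) (fun x _ => hW (LinearMap.mem_range_self _ x)) := by
    refine LinearMap.ext fun x => Subtype.ext ?_
    rfl
  rw [← h₁, ← h₂, LinearMap.trace_comp_comm']

/-- Cyclicity of the trace for restrictions to ranges, linear version. -/
lemma trace_range_comm {Xc Yc : Type u} [AddCommGroup Xc] [Module ℝ Xc]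
    [AddCommGroup Yc] [Module ℝ Yc] (Ul : Xc →ₗ[ℝ] Yc) (Vl : Yc →ₗ[ℝ] Xc)
    [FiniteDimensional ℝ ↥(LinearMap.range Vl)]
    [FiniteDimensional ℝ ↥(LinearMap.range (Ul ∘ₗ Vl))]
    [FiniteDimensional ℝ ↥(LinearMap.range (Vl ∘ₗ Ul))] :
    LinearMap.trace ℝ (LinearMap.range (Ul ∘ₗ Vl))
      ((Ul ∘ₗ Vl).restrict (p := LinearMap.range (Ul ∘ₗ Vl)) (q := LinearMap.range (Ul ∘ₗ Vl))
        (fun x _ => LinearMap.mem_range_self _ x)) =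
    LinearMap.trace ℝ (LinearMap.range (Vl ∘ₗ Ul))
      ((Vl ∘ₗ Ul).restrict (p := LinearMap.range (Vl ∘ₗ Ul)) (q := LinearMap.range (Vl ∘ₗ Ul))
        (fun x _ => LinearMap.mem_range_self _ x)) := by
  set RV := LinearMap.range Vl with hRV
  set RUV := LinearMap.range (Ul ∘ₗ Vl) with hRUV
  have ha : ∀ c : ↥RV, (Ul.domRestrict RV) c ∈ RUV := by
    rintro ⟨x, y, hy⟩
    exact ⟨y, by simp [← hy]⟩
  set a : ↥RV →ₗ[ℝ] ↥RUV := LinearMap.codRestrict RUV (Ul.domRestrict RV) ha with hadef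
  set b : ↥RUV →ₗ[ℝ] ↥RV :=
    LinearMap.codRestrict RV (Vl.domRestrict RUV)
      (fun c => LinearMap.mem_range_self _ _) with hbdef
  have e₁ : ((Ul ∘ₗ Vl).restrict (p := RUV) (q := RUV)
      (fun x _ => LinearMap.mem_range_self _ x)) = a ∘ₗ b := by
    refine LinearMap.ext fun x => Subtype.ext ?_
    rfl
  have e₂ : ((Vl ∘ₗ Ul).restrict (p := RV) (q := RV)
      (fun x _ => LinearMap.mem_range_self Vl (Ul x))) = b ∘ₗ a := by
    refine LinearMap.ext fun x => Subtype.ext ?_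
    rfl
  have hle : LinearMap.range (Vl ∘ₗ Ul) ≤ RV := LinearMap.range_comp_le_range _ _
  calc LinearMap.trace ℝ RUV ((Ul ∘ₗ Vl).restrict
        (fun x _ => LinearMap.mem_range_self _ x))
      = LinearMap.trace ℝ RUV (a ∘ₗ b) := by rw [e₁]
    _ = LinearMap.trace ℝ RV (b ∘ₗ a) := LinearMap.trace_comp_comm' b a
    _ = LinearMap.trace ℝ RV ((Vl ∘ₗ Ul).restrict (p := RV) (q := RV)
        (fun x _ => LinearMap.mem_range_self Vl (Ul x))) := by rw [e₂]
    _ = LinearMap.trace ℝ (LinearMap.range (Vl ∘ₗ Ul)) ((Vl ∘ₗ Ul).restrict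
        (fun x _ => LinearMap.mem_range_self _ x)) :=
      (trace_restrict_eq_of_le (Vl ∘ₗ Ul) RV hle).symm

/-- `fTrace` of a composition with one finite rank factor is symmetric. -/
lemma fTrace_comm {X Y : BanachSpc.{u}} (U : X.carrier →L[ℝ] Y.carrier)
    (V : Y.carrier →L[ℝ] X.carrier) (hV : FinRankOp V) :
    fTrace (U.comp V) = fTrace (V.comp U) := by
  haveI hV' : FiniteDimensional ℝ
      ↥(LinearMap.range (V : Y.carrier →ₗ[ℝ] X.carrier)) := hV
  haveI h1 : FiniteDimensional ℝ ↥(LinearMap.range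
      ((U : X.carrier →ₗ[ℝ] Y.carrier) ∘ₗ (V : Y.carrier →ₗ[ℝ] X.carrier))) := by
    rw [LinearMap.range_comp]
    exact Module.Finite.map _ _
  haveI h2 : FiniteDimensional ℝ ↥(LinearMap.range
      ((V : Y.carrier →ₗ[ℝ] X.carrier) ∘ₗ (U : X.carrier →ₗ[ℝ] Y.carrier))) :=
    Submodule.finiteDimensional_of_le (LinearMap.range_comp_le_range _ _)
  exact trace_range_comm (U : X.carrier →ₗ[ℝ] Y.carrier) (V : Y.carrier →ₗ[ℝ] X.carrier)

/-- `fTrace` computed over any finite-dimensional submodule containing the range. -/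
lemma fTrace_eq_trace_on {E : BanachSpc.{u}} (T : E.carrier →L[ℝ] E.carrier)
    (W : Submodule ℝ E.carrier)
    (hW : LinearMap.range (T : E.carrier →ₗ[ℝ] E.carrier) ≤ W)
    [FiniteDimensional ℝ ↥W] :
    fTrace T = LinearMap.trace ℝ W ((T : E.carrier →ₗ[ℝ] E.carrier).restrict
      (p := W) (q := W) (fun x _ => hW (LinearMap.mem_range_self _ x))) := by
  haveI : FiniteDimensional ℝ
      ↥(LinearMap.range (T : E.carrier →ₗ[ℝ] E.carrier)) :=
    Submodule.finiteDimensional_of_le hW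
  exact trace_restrict_eq_of_le _ W hW

/-- A trace bound on a finite-dimensional normed space. -/
lemma exists_trace_bound (W : Type u) [NormedAddCommGroup W] [NormedSpace ℝ W]
    [FiniteDimensional ℝ W] :
    ∃ C : ℝ, 0 ≤ C ∧ ∀ (f : W →ₗ[ℝ] W) (M : ℝ), 0 ≤ M → (∀ x, ‖f x‖ ≤ M * ‖x‖) →
      |LinearMap.trace ℝ W f| ≤ C * M := by
  classical
  set b := Module.finBasis ℝ W with hb
  refine ⟨∑ i, ‖LinearMap.toContinuousLinearMap (b.coord i)‖ * ‖b i‖,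
    Finset.sum_nonneg (fun i _ => mul_nonneg (norm_nonneg _) (norm_nonneg _)), ?_⟩
  intro f M hM hf
  rw [LinearMap.trace_eq_matrix_trace ℝ b f]
  have htr : Matrix.trace (LinearMap.toMatrix b b f) = ∑ i, b.repr (f (b i)) i := by
    simp [Matrix.trace, Matrix.diag, LinearMap.toMatrix_apply]
  rw [htr]
  calc |∑ i, b.repr (f (b i)) i| ≤ ∑ i, |b.repr (f (b i)) i| :=
        Finset.abs_sum_le_sum_abs _ _
    _ ≤ ∑ i, (‖LinearMap.toContinuousLinearMap (b.coord i)‖ * ‖b i‖) * M := by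
        refine Finset.sum_le_sum fun i _ => ?_
        have h1 : |b.repr (f (b i)) i| =
            ‖LinearMap.toContinuousLinearMap (b.coord i) (f (b i))‖ := by
          rw [LinearMap.coe_toContinuousLinearMap']
          rw [Module.Basis.coord_apply]
          exact (Real.norm_eq_abs _).symm
        rw [h1]
        calc ‖LinearMap.toContinuousLinearMap (b.coord i) (f (b i))‖
            ≤ ‖LinearMap.toContinuousLinearMap (b.coord i)‖ * ‖f (b i)‖ :=
              ContinuousLinearMap.le_opNorm _ _
          _ ≤ ‖LinearMap.toContinuousLinearMap (b.coord i)‖ * (M * ‖b i‖) :=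
              mul_le_mul_of_nonneg_left (hf _) (norm_nonneg _)
          _ = (‖LinearMap.toContinuousLinearMap (b.coord i)‖ * ‖b i‖) * M := by ring
    _ = (∑ i, ‖LinearMap.toContinuousLinearMap (b.coord i)‖ * ‖b i‖) * M := by
        rw [← Finset.sum_mul]

/-- Every finite rank operator belongs to the conjugate ideal. -/
lemma conj_mem_of_finRank (A : OperatorIdeal.{u}) (hA : IsPBanachIdeal 1 A)
    {E F : BanachSpc.{u}} (T : E.carrier →L[ℝ] F.carrier) (hT : FinRankOp T) :
    A.conj.mem E F T := by
  haveI : FiniteDimensional ℝ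
      ↥(LinearMap.range (T : E.carrier →ₗ[ℝ] F.carrier)) := hT
  obtain ⟨C, hC0, hC⟩ :=
    exists_trace_bound ↥(LinearMap.range (T : E.carrier →ₗ[ℝ] F.carrier))
  refine ⟨C * ‖T‖, mul_nonneg hC0 (norm_nonneg _), fun L hL => ?_⟩
  have hW : LinearMap.range ((T.comp L : F.carrier →L[ℝ] F.carrier) :
      F.carrier →ₗ[ℝ] F.carrier) ≤ LinearMap.range (T : E.carrier →ₗ[ℝ] F.carrier) :=
    LinearMap.range_comp_le_range _ _
  rw [fTrace_eq_trace_on (T.comp L) _ hW]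
  have hL' : ‖L‖ ≤ A.nrm F E L := hA.opnorm_le F E L (hA.finrank_mem F E L hL)
  have hM0 : 0 ≤ ‖T‖ * A.nrm F E L := mul_nonneg (norm_nonneg _) (hA.nonneg _ _ _)
  have hbound := hC (((T.comp L : F.carrier →L[ℝ] F.carrier) :
      F.carrier →ₗ[ℝ] F.carrier).restrict
      (p := LinearMap.range (T : E.carrier →ₗ[ℝ] F.carrier))
      (q := LinearMap.range (T : E.carrier →ₗ[ℝ] F.carrier))
      (fun x _ => hW (LinearMap.mem_range_self _ x)))
    (‖T‖ * A.nrm F E L) hM0 ?_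
  · calc |LinearMap.trace ℝ _ _| ≤ C * (‖T‖ * A.nrm F E L) := hbound
      _ = C * ‖T‖ * A.nrm F E L := by ring
  · intro x
    have hx : ‖(((T.comp L : F.carrier →L[ℝ] F.carrier) :
        F.carrier →ₗ[ℝ] F.carrier).restrict
        (fun x _ => hW (LinearMap.mem_range_self _ x))) x‖ =
        ‖(T.comp L) (x : F.carrier)‖ := rfl
    rw [hx]
    calc ‖(T.comp L) (x : F.carrier)‖ ≤ ‖T.comp L‖ * ‖(x : F.carrier)‖ :=
          ContinuousLinearMap.le_opNorm _ _
      _ ≤ (‖T‖ * ‖L‖) * ‖(x : F.carrier)‖ :=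
          mul_le_mul_of_nonneg_right (ContinuousLinearMap.opNorm_comp_le _ _) (norm_nonneg _)
      _ ≤ (‖T‖ * A.nrm F E L) * ‖(x : F.carrier)‖ :=
          mul_le_mul_of_nonneg_right
            (mul_le_mul_of_nonneg_left hL' (norm_nonneg _)) (norm_nonneg _)
      _ = (‖T‖ * A.nrm F E L) * ‖x‖ := rfl

lemma conj_nrm_nonneg (A : OperatorIdeal.{u}) {E F : BanachSpc.{u}}
    (T : E.carrier →L[ℝ] F.carrier) : 0 ≤ A.conj.nrm E F T :=
  Real.sInf_nonneg (fun _ hc => hc.1)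

lemma adj_nrm_nonneg (A : OperatorIdeal.{u}) {E F : BanachSpc.{u}}
    (T : E.carrier →L[ℝ] F.carrier) : 0 ≤ A.adj.nrm E F T :=
  Real.sInf_nonneg (fun _ hc => hc.1)

/-- Any constant witnessing the conjugate-ideal estimate also witnesses the adjoint-ideal
estimate. -/
lemma conj_le_adj_mem (A : OperatorIdeal.{u}) (hA : IsPBanachIdeal 1 A)
    {E F : BanachSpc.{u}} (T : E.carrier →L[ℝ] F.carrier) {c : ℝ} (hc0 : 0 ≤ c)
    (hc : ∀ L : F.carrier →L[ℝ] E.carrier, FinRankOp L →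
      |fTrace (T.comp L)| ≤ c * A.nrm F E L) :
    0 ≤ c ∧ ∀ (E₀ F₀ : BanachSpc.{u}) (B : E₀.carrier →L[ℝ] E.carrier)
      (S : F₀.carrier →L[ℝ] E₀.carrier) (A₀ : F.carrier →L[ℝ] F₀.carrier),
      FinRankOp B → FinRankOp A₀ → A.mem F₀ E₀ S →
      |fTrace (T.comp (B.comp (S.comp A₀)))| ≤ c * ‖B‖ * A.nrm F₀ E₀ S * ‖A₀‖ := by
  refine ⟨hc0, fun E₀ F₀ B S A₀ hB hA₀ hS => ?_⟩
  have hfr : FinRankOp (B.comp (S.comp A₀)) := by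
    haveI : FiniteDimensional ℝ
        ↥(LinearMap.range (B : E₀.carrier →ₗ[ℝ] E.carrier)) := hB
    exact Submodule.finiteDimensional_of_le (LinearMap.range_comp_le_range _ _)
  calc |fTrace (T.comp (B.comp (S.comp A₀)))|
      ≤ c * A.nrm F E (B.comp (S.comp A₀)) := hc _ hfr
    _ ≤ c * (‖B‖ * A.nrm F₀ E₀ S * ‖A₀‖) :=
        mul_le_mul_of_nonneg_left (hA.comp_le F F₀ E₀ E A₀ S B hS) hc0
    _ = c * ‖B‖ * A.nrm F₀ E₀ S * ‖A₀‖ := by ring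

/-- For operators with finite-dimensional domain, the defining sets of the conjugate and the
adjoint ideal norms coincide (this uses left accessibility of `A`). -/
lemma conjSet_eq_adjSet (A : OperatorIdeal.{u}) (hA : IsPBanachIdeal 1 A)
    (hla : LeftAccessible A) {E F : BanachSpc.{u}} (hE : FiniteDimensional ℝ E.carrier)
    (T : E.carrier →L[ℝ] F.carrier) :
    { c : ℝ | 0 ≤ c ∧ ∀ L : F.carrier →L[ℝ] E.carrier, FinRankOp L →
        |fTrace (T.comp L)| ≤ c * A.nrm F E L } =
    { c : ℝ | 0 ≤ c ∧ ∀ (E₀ F₀ : BanachSpc.{u}) (B : E₀.carrier →L[ℝ] E.carrier)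
        (S : F₀.carrier →L[ℝ] E₀.carrier) (A₀ : F.carrier →L[ℝ] F₀.carrier),
        FinRankOp B → FinRankOp A₀ → A.mem F₀ E₀ S →
        |fTrace (T.comp (B.comp (S.comp A₀)))| ≤ c * ‖B‖ * A.nrm F₀ E₀ S * ‖A₀‖ } := by
  haveI := hE
  ext c
  constructor
  · rintro ⟨hc0, hc⟩
    exact conj_le_adj_mem A hA T hc0 hc
  · rintro ⟨hc0, hc⟩
    refine ⟨hc0, fun L _ => ?_⟩
    have key : ∀ ε : ℝ, 0 < ε →
        |fTrace (T.comp L)| ≤ c * A.nrm F E L + ε * (c * A.nrm F E L) := by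
      intro ε hε
      obtain ⟨K, hK, hfd, S', hS'eq, hS'nrm⟩ := hla F E hE L ε hε
      haveI := hK
      haveI hfd' : FiniteDimensional ℝ (QuotBanach F K hK).carrier := hfd
      let q : F.carrier →L[ℝ] (QuotBanach F K hK).carrier :=
        LinearMap.mkContinuous K.mkQ 1 (fun x => by
          rw [one_mul]; exact Submodule.Quotient.norm_mk_le K x)
      have hq : ‖q‖ ≤ 1 := LinearMap.mkContinuous_norm_le _ zero_le_one _
      have hqfr : FinRankOp q := by unfold FinRankOp; infer_instance
      have hidfr : FinRankOp (ContinuousLinearMap.id ℝ E.carrier) := by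
        unfold FinRankOp; infer_instance
      have hS'fr : FinRankOp S' := by unfold FinRankOp; infer_instance
      have hS'mem : A.mem (QuotBanach F K hK) E S' := hA.finrank_mem _ _ _ hS'fr
      have hcomp : (ContinuousLinearMap.id ℝ E.carrier).comp (S'.comp q) = L := by
        ext x
        simp only [ContinuousLinearMap.comp_apply, ContinuousLinearMap.id_apply]
        rw [hS'eq x]
        rfl
      have hmain := hc E (QuotBanach F K hK) (ContinuousLinearMap.id ℝ E.carrier) S' q
        hidfr hqfr hS'mem
      rw [hcomp] at hmain
      have hid : ‖ContinuousLinearMap.id ℝ E.carrier‖ ≤ 1 :=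
        ContinuousLinearMap.norm_id_le
      have h1 : 0 ≤ A.nrm (QuotBanach F K hK) E S' := hA.nonneg _ _ _
      have a0 : 0 ≤ c * ‖ContinuousLinearMap.id ℝ E.carrier‖ * A.nrm (QuotBanach F K hK) E S' :=
        mul_nonneg (mul_nonneg hc0 (norm_nonneg _)) h1
      have e1 : c * ‖ContinuousLinearMap.id ℝ E.carrier‖ * A.nrm (QuotBanach F K hK) E S' * ‖q‖
          ≤ c * A.nrm (QuotBanach F K hK) E S' := by
        calc c * ‖ContinuousLinearMap.id ℝ E.carrier‖ * A.nrm (QuotBanach F K hK) E S' * ‖q‖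
            ≤ c * ‖ContinuousLinearMap.id ℝ E.carrier‖ * A.nrm (QuotBanach F K hK) E S' * 1 :=
              mul_le_mul_of_nonneg_left hq a0
          _ = c * ‖ContinuousLinearMap.id ℝ E.carrier‖ * A.nrm (QuotBanach F K hK) E S' := by
              ring
          _ ≤ (c * 1) * A.nrm (QuotBanach F K hK) E S' :=
              mul_le_mul_of_nonneg_right (mul_le_mul_of_nonneg_left hid hc0) h1
          _ = c * A.nrm (QuotBanach F K hK) E S' := by ring
      have e2 : c * A.nrm (QuotBanach F K hK) E S' ≤ c * ((1 + ε) * A.nrm F E L) :=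
        mul_le_mul_of_nonneg_left hS'nrm hc0
      have e3 : c * ((1 + ε) * A.nrm F E L) =
          c * A.nrm F E L + ε * (c * A.nrm F E L) := by ring
      linarith
    have hm : 0 ≤ c * A.nrm F E L := mul_nonneg hc0 (hA.nonneg _ _ _)
    refine le_of_forall_pos_le_add fun δ hδ => ?_
    rcases eq_or_lt_of_le hm with h | h
    · have hk := key 1 one_pos
      have : |fTrace (T.comp L)| ≤ 0 + 1 * 0 := by rw [h]; exact hk
      linarith
    · have hk := key (δ / (c * A.nrm F E L)) (div_pos hδ h)
      have hmul : (δ / (c * A.nrm F E L)) * (c * A.nrm F E L) = δ :=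
        div_mul_cancel₀ _ (ne_of_gt h)
      linarith

/-- For operators with finite-dimensional domain, `A^Δ` and `A*` norms coincide. -/
lemma conj_nrm_eq_adj_nrm (A : OperatorIdeal.{u}) (hA : IsPBanachIdeal 1 A)
    (hla : LeftAccessible A) {E F : BanachSpc.{u}} (hE : FiniteDimensional ℝ E.carrier)
    (T : E.carrier →L[ℝ] F.carrier) :
    A.conj.nrm E F T = A.adj.nrm E F T :=
  congrArg sInf (conjSet_eq_adjSet A hA hla hE T)

lemma conj_mem_imp_adj_mem (A : OperatorIdeal.{u}) (hA : IsPBanachIdeal 1 A)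
    {E F : BanachSpc.{u}} (T : E.carrier →L[ℝ] F.carrier) (h : A.conj.mem E F T) :
    A.adj.mem E F T := by
  obtain ⟨c, hc0, hc⟩ := h
  exact ⟨c, conj_le_adj_mem A hA T hc0 hc⟩

lemma adj_nrm_le_conj_nrm (A : OperatorIdeal.{u}) (hA : IsPBanachIdeal 1 A)
    {E F : BanachSpc.{u}} (T : E.carrier →L[ℝ] F.carrier) (h : A.conj.mem E F T) :
    A.adj.nrm E F T ≤ A.conj.nrm E F T := by
  refine csInf_le_csInf ⟨0, fun x hx => hx.1⟩ h ?_
  rintro c ⟨hc0, hc⟩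
  exact conj_le_adj_mem A hA T hc0 hc

/-- If `C` witnesses the adjoint estimate for `S`, then `‖P‖ * C * ‖R‖` witnesses it for
`(P ∘ S) ∘ R`. -/
lemma adj_comp_mem_aux (A : OperatorIdeal.{u}) (hA : IsPBanachIdeal 1 A)
    {N F₀ E₀ Q : BanachSpc.{u}} (S : F₀.carrier →L[ℝ] E₀.carrier)
    (R : N.carrier →L[ℝ] F₀.carrier) (P : E₀.carrier →L[ℝ] Q.carrier)
    {C : ℝ} (hC0 : 0 ≤ C)
    (hC : ∀ (E₁ F₁ : BanachSpc.{u}) (B : E₁.carrier →L[ℝ] F₀.carrier)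
        (S₁ : F₁.carrier →L[ℝ] E₁.carrier) (A₁ : E₀.carrier →L[ℝ] F₁.carrier),
        FinRankOp B → FinRankOp A₁ → A.mem F₁ E₁ S₁ →
        |fTrace (S.comp (B.comp (S₁.comp A₁)))| ≤ C * ‖B‖ * A.nrm F₁ E₁ S₁ * ‖A₁‖) :
    0 ≤ ‖P‖ * C * ‖R‖ ∧ ∀ (E₁ F₁ : BanachSpc.{u}) (B : E₁.carrier →L[ℝ] N.carrier)
        (S₁ : F₁.carrier →L[ℝ] E₁.carrier) (A₁ : Q.carrier →L[ℝ] F₁.carrier),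
        FinRankOp B → FinRankOp A₁ → A.mem F₁ E₁ S₁ →
        |fTrace ((((P.comp S).comp R)).comp (B.comp (S₁.comp A₁)))| ≤
          ‖P‖ * C * ‖R‖ * ‖B‖ * A.nrm F₁ E₁ S₁ * ‖A₁‖ := by
  refine ⟨mul_nonneg (mul_nonneg (norm_nonneg _) hC0) (norm_nonneg _),
    fun E₁ F₁ B S₁ A₁ hB hA₁ hS₁ => ?_⟩
  set K : Q.carrier →L[ℝ] E₀.carrier :=
    ((S.comp R).comp B).comp (S₁.comp A₁) with hKdef
  have hKfr : FinRankOp K := by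
    haveI : FiniteDimensional ℝ
        ↥(LinearMap.range (B : E₁.carrier →ₗ[ℝ] N.carrier)) := hB
    haveI : FiniteDimensional ℝ ↥(LinearMap.range
        (((S.comp R).comp B : E₁.carrier →L[ℝ] E₀.carrier) :
          E₁.carrier →ₗ[ℝ] E₀.carrier)) := by
      rw [ContinuousLinearMap.toLinearMap_comp, LinearMap.range_comp]
      exact Module.Finite.map _ _
    unfold FinRankOp
    rw [hKdef, ContinuousLinearMap.toLinearMap_comp]
    exact Submodule.finiteDimensional_of_le (LinearMap.range_comp_le_range _ _)
  have hRB : FinRankOp (R.comp B) := by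
    haveI : FiniteDimensional ℝ
        ↥(LinearMap.range (B : E₁.carrier →ₗ[ℝ] N.carrier)) := hB
    unfold FinRankOp
    rw [ContinuousLinearMap.toLinearMap_comp, LinearMap.range_comp]
    exact Module.Finite.map _ _
  have hA₁P : FinRankOp (A₁.comp P) := by
    haveI : FiniteDimensional ℝ
        ↥(LinearMap.range (A₁ : Q.carrier →ₗ[ℝ] F₁.carrier)) := hA₁
    unfold FinRankOp
    rw [ContinuousLinearMap.toLinearMap_comp]
    exact Submodule.finiteDimensional_of_le (LinearMap.range_comp_le_range _ _)
  have hPK : (((P.comp S).comp R)).comp (B.comp (S₁.comp A₁)) = P.comp K := by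
    ext x; rfl
  have hKP : fTrace (P.comp K) = fTrace (K.comp P) := fTrace_comm P K hKfr
  have hmatch : K.comp P = S.comp ((R.comp B).comp (S₁.comp (A₁.comp P))) := by
    ext x; rfl
  have key := hC E₁ F₁ (R.comp B) S₁ (A₁.comp P) hRB hA₁P hS₁
  rw [hPK, hKP, hmatch]
  have hn : 0 ≤ A.nrm F₁ E₁ S₁ := hA.nonneg _ _ _
  calc |fTrace (S.comp ((R.comp B).comp (S₁.comp (A₁.comp P))))|
      ≤ C * ‖R.comp B‖ * A.nrm F₁ E₁ S₁ * ‖A₁.comp P‖ := key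
    _ ≤ C * (‖R‖ * ‖B‖) * A.nrm F₁ E₁ S₁ * (‖A₁‖ * ‖P‖) := by
        have m1 : C * ‖R.comp B‖ ≤ C * (‖R‖ * ‖B‖) :=
          mul_le_mul_of_nonneg_left (ContinuousLinearMap.opNorm_comp_le _ _) hC0
        have m2 : C * ‖R.comp B‖ * A.nrm F₁ E₁ S₁ ≤
            C * (‖R‖ * ‖B‖) * A.nrm F₁ E₁ S₁ :=
          mul_le_mul_of_nonneg_right m1 hn
        exact mul_le_mul m2 (ContinuousLinearMap.opNorm_comp_le _ _) (norm_nonneg _)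
          (mul_nonneg (mul_nonneg hC0 (mul_nonneg (norm_nonneg _) (norm_nonneg _))) hn)
    _ = ‖P‖ * C * ‖R‖ * ‖B‖ * A.nrm F₁ E₁ S₁ * ‖A₁‖ := by ring

/-- The adjoint ideal norm satisfies the ideal composition inequality. -/
lemma adj_nrm_comp_le (A : OperatorIdeal.{u}) (hA : IsPBanachIdeal 1 A)
    {N F₀ E₀ Q : BanachSpc.{u}} (S : F₀.carrier →L[ℝ] E₀.carrier)
    (hS : A.adj.mem F₀ E₀ S)
    (R : N.carrier →L[ℝ] F₀.carrier) (P : E₀.carrier →L[ℝ] Q.carrier) :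
    A.adj.nrm N Q ((P.comp S).comp R) ≤ ‖P‖ * A.adj.nrm F₀ E₀ S * ‖R‖ := by
  have hbdd : BddBelow { c : ℝ | 0 ≤ c ∧ ∀ (E₁ F₁ : BanachSpc.{u})
      (B : E₁.carrier →L[ℝ] N.carrier) (S₁ : F₁.carrier →L[ℝ] E₁.carrier)
      (A₁ : Q.carrier →L[ℝ] F₁.carrier), FinRankOp B → FinRankOp A₁ → A.mem F₁ E₁ S₁ →
      |fTrace ((((P.comp S).comp R)).comp (B.comp (S₁.comp A₁)))| ≤
        c * ‖B‖ * A.nrm F₁ E₁ S₁ * ‖A₁‖ } := ⟨0, fun _ hc => hc.1⟩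
  have step : ∀ C : ℝ, (0 ≤ C ∧ ∀ (E₁ F₁ : BanachSpc.{u})
      (B : E₁.carrier →L[ℝ] F₀.carrier) (S₁ : F₁.carrier →L[ℝ] E₁.carrier)
      (A₁ : E₀.carrier →L[ℝ] F₁.carrier), FinRankOp B → FinRankOp A₁ → A.mem F₁ E₁ S₁ →
      |fTrace (S.comp (B.comp (S₁.comp A₁)))| ≤ C * ‖B‖ * A.nrm F₁ E₁ S₁ * ‖A₁‖) →
      A.adj.nrm N Q ((P.comp S).comp R) ≤ ‖P‖ * C * ‖R‖ := by
    intro C hCmem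
    exact csInf_le hbdd (adj_comp_mem_aux A hA S R P hCmem.1 hCmem.2)
  by_cases hPR : ‖P‖ * ‖R‖ = 0
  · obtain ⟨C₀, hC₀⟩ := hS
    have h1 := step C₀ hC₀
    have h2 : ‖P‖ * C₀ * ‖R‖ = 0 := by
      rcases mul_eq_zero.mp hPR with h | h <;> rw [h] <;> ring
    have h3 : ‖P‖ * A.adj.nrm F₀ E₀ S * ‖R‖ = 0 := by
      rcases mul_eq_zero.mp hPR with h | h <;> rw [h] <;> ring
    rw [h3]; rw [h2] at h1; exact h1
  · have hP0 : 0 < ‖P‖ * ‖R‖ :=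
      lt_of_le_of_ne (mul_nonneg (norm_nonneg _) (norm_nonneg _)) (Ne.symm hPR)
    have hlow : A.adj.nrm N Q ((P.comp S).comp R) / (‖P‖ * ‖R‖) ≤
        A.adj.nrm F₀ E₀ S := by
      refine le_csInf hS ?_
      rintro C hC
      rw [div_le_iff₀ hP0]
      calc A.adj.nrm N Q ((P.comp S).comp R) ≤ ‖P‖ * C * ‖R‖ := step C hC
        _ = C * (‖P‖ * ‖R‖) := by ring
    have := (div_le_iff₀ hP0).mp hlow
    calc A.adj.nrm N Q ((P.comp S).comp R)
        ≤ A.adj.nrm F₀ E₀ S * (‖P‖ * ‖R‖) := this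
      _ = ‖P‖ * A.adj.nrm F₀ E₀ S * ‖R‖ := by ring

/-- The defining sets of `(A^Δ)*` and `(A*)*` coincide (for a left accessible Banach ideal). -/
lemma adjSet_conj_eq_adjSet_adj (A : OperatorIdeal.{u}) (hA : IsPBanachIdeal 1 A)
    (hla : LeftAccessible A) {E F : BanachSpc.{u}} (T : E.carrier →L[ℝ] F.carrier) :
    { c : ℝ | 0 ≤ c ∧ ∀ (E₀ F₀ : BanachSpc.{u}) (B : E₀.carrier →L[ℝ] E.carrier)
        (S : F₀.carrier →L[ℝ] E₀.carrier) (A₀ : F.carrier →L[ℝ] F₀.carrier),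
        FinRankOp B → FinRankOp A₀ → A.conj.mem F₀ E₀ S →
        |fTrace (T.comp (B.comp (S.comp A₀)))| ≤
          c * ‖B‖ * A.conj.nrm F₀ E₀ S * ‖A₀‖ } =
    { c : ℝ | 0 ≤ c ∧ ∀ (E₀ F₀ : BanachSpc.{u}) (B : E₀.carrier →L[ℝ] E.carrier)
        (S : F₀.carrier →L[ℝ] E₀.carrier) (A₀ : F.carrier →L[ℝ] F₀.carrier),
        FinRankOp B → FinRankOp A₀ → A.adj.mem F₀ E₀ S →
        |fTrace (T.comp (B.comp (S.comp A₀)))| ≤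
          c * ‖B‖ * A.adj.nrm F₀ E₀ S * ‖A₀‖ } := by
  ext c
  constructor
  · -- the sandwich direction: reduce to finite-dimensional factors
    rintro ⟨hc0, hc⟩
    refine ⟨hc0, fun E₀ F₀ B S A₀ hB hA₀ hS => ?_⟩
    haveI hRB : FiniteDimensional ℝ
        ↥(LinearMap.range (B : E₀.carrier →ₗ[ℝ] E.carrier)) := hB
    haveI hNA : FiniteDimensional ℝ
        ↥(LinearMap.range (A₀ : F.carrier →ₗ[ℝ] F₀.carrier)) := hA₀
    haveI : CompleteSpace ↥(LinearMap.range (B : E₀.carrier →ₗ[ℝ] E.carrier)) :=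
      FiniteDimensional.complete ℝ _
    haveI : CompleteSpace ↥(LinearMap.range (A₀ : F.carrier →ₗ[ℝ] F₀.carrier)) :=
      FiniteDimensional.complete ℝ _
    let RBb : BanachSpc.{u} :=
      ⟨↥(LinearMap.range (B : E₀.carrier →ₗ[ℝ] E.carrier))⟩
    let NAb : BanachSpc.{u} :=
      ⟨↥(LinearMap.range (A₀ : F.carrier →ₗ[ℝ] F₀.carrier))⟩
    haveI : FiniteDimensional ℝ RBb.carrier := hRB
    haveI : FiniteDimensional ℝ NAb.carrier := hNA
    let ιB : RBb.carrier →L[ℝ] E.carrier :=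
      (LinearMap.range (B : E₀.carrier →ₗ[ℝ] E.carrier)).subtypeL
    let B₀ : E₀.carrier →L[ℝ] RBb.carrier :=
      B.codRestrict (LinearMap.range (B : E₀.carrier →ₗ[ℝ] E.carrier))
        (fun x => LinearMap.mem_range_self _ x)
    let ιA : NAb.carrier →L[ℝ] F₀.carrier :=
      (LinearMap.range (A₀ : F.carrier →ₗ[ℝ] F₀.carrier)).subtypeL
    let A₀' : F.carrier →L[ℝ] NAb.carrier :=
      A₀.codRestrict (LinearMap.range (A₀ : F.carrier →ₗ[ℝ] F₀.carrier))
        (fun x => LinearMap.mem_range_self _ x)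
    let St : NAb.carrier →L[ℝ] RBb.carrier := (B₀.comp S).comp ιA
    have hStfr : FinRankOp St := by unfold FinRankOp; infer_instance
    have hiBfr : FinRankOp ιB := by unfold FinRankOp; infer_instance
    have hA₀'fr : FinRankOp A₀' := by unfold FinRankOp; infer_instance
    have hStmem : A.conj.mem NAb RBb St := conj_mem_of_finRank A hA St hStfr
    have hcomp : ιB.comp (St.comp A₀') = B.comp (S.comp A₀) := by
      ext x; rfl
    have hmain := hc RBb NAb ιB St A₀' hiBfr hA₀'fr hStmem
    rw [hcomp] at hmain
    have heq : A.conj.nrm NAb RBb St = A.adj.nrm NAb RBb St :=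
      conj_nrm_eq_adj_nrm A hA hla hNA St
    rw [heq] at hmain
    have hcompS : A.adj.nrm NAb RBb St ≤ ‖B₀‖ * A.adj.nrm F₀ E₀ S * ‖ιA‖ :=
      adj_nrm_comp_le A hA S hS ιA B₀
    have hiBnorm : ‖ιB‖ ≤ 1 := Submodule.norm_subtypeL_le _
    have hiAnorm : ‖ιA‖ ≤ 1 := Submodule.norm_subtypeL_le _
    have hB₀norm : ‖B₀‖ ≤ ‖B‖ := by
      refine ContinuousLinearMap.opNorm_le_bound _ (norm_nonneg B) fun x => ?_
      have hx : ‖B₀ x‖ = ‖B x‖ := rfl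
      rw [hx]; exact B.le_opNorm x
    have hA₀'norm : ‖A₀'‖ ≤ ‖A₀‖ := by
      refine ContinuousLinearMap.opNorm_le_bound _ (norm_nonneg A₀) fun x => ?_
      have hx : ‖A₀' x‖ = ‖A₀ x‖ := rfl
      rw [hx]; exact A₀.le_opNorm x
    have hn : 0 ≤ A.adj.nrm F₀ E₀ S := adj_nrm_nonneg A S
    have hnSt : 0 ≤ A.adj.nrm NAb RBb St := adj_nrm_nonneg A St
    have a4 : A.adj.nrm NAb RBb St ≤ ‖B‖ * A.adj.nrm F₀ E₀ S := by
      have b1 : ‖B₀‖ * A.adj.nrm F₀ E₀ S * ‖ιA‖ ≤ ‖B₀‖ * A.adj.nrm F₀ E₀ S * 1 :=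
        mul_le_mul_of_nonneg_left hiAnorm (mul_nonneg (ContinuousLinearMap.opNorm_nonneg _) hn)
      have b2 : ‖B₀‖ * A.adj.nrm F₀ E₀ S ≤ ‖B‖ * A.adj.nrm F₀ E₀ S :=
        mul_le_mul_of_nonneg_right hB₀norm hn
      calc A.adj.nrm NAb RBb St ≤ ‖B₀‖ * A.adj.nrm F₀ E₀ S * ‖ιA‖ := hcompS
        _ ≤ ‖B₀‖ * A.adj.nrm F₀ E₀ S * 1 := b1
        _ = ‖B₀‖ * A.adj.nrm F₀ E₀ S := by ring
        _ ≤ ‖B‖ * A.adj.nrm F₀ E₀ S := b2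
    have hchain : c * ‖ιB‖ * A.adj.nrm NAb RBb St * ‖A₀'‖ ≤
        c * ‖B‖ * A.adj.nrm F₀ E₀ S * ‖A₀‖ := by
      have a1 : c * ‖ιB‖ ≤ c := by
        have := mul_le_mul_of_nonneg_left hiBnorm hc0
        linarith
      have a2 : c * ‖ιB‖ * A.adj.nrm NAb RBb St ≤ c * A.adj.nrm NAb RBb St :=
        mul_le_mul_of_nonneg_right a1 hnSt
      have a3 : c * A.adj.nrm NAb RBb St ≤ c * (‖B‖ * A.adj.nrm F₀ E₀ S) :=
        mul_le_mul_of_nonneg_left a4 hc0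
      calc c * ‖ιB‖ * A.adj.nrm NAb RBb St * ‖A₀'‖
          ≤ (c * (‖B‖ * A.adj.nrm F₀ E₀ S)) * ‖A₀‖ :=
            mul_le_mul (le_trans a2 a3) hA₀'norm (ContinuousLinearMap.opNorm_nonneg _)
              (mul_nonneg hc0 (mul_nonneg (norm_nonneg _) hn))
        _ = c * ‖B‖ * A.adj.nrm F₀ E₀ S * ‖A₀‖ := by ring
    exact le_trans hmain hchain
  · -- the easy direction
    rintro ⟨hc0, hc⟩
    refine ⟨hc0, fun E₀ F₀ B S A₀ hB hA₀ hS => ?_⟩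
    have hSadj : A.adj.mem F₀ E₀ S := conj_mem_imp_adj_mem A hA S hS
    have hle : A.adj.nrm F₀ E₀ S ≤ A.conj.nrm F₀ E₀ S := adj_nrm_le_conj_nrm A hA S hS
    have hmain := hc E₀ F₀ B S A₀ hB hA₀ hSadj
    have hchain : c * ‖B‖ * A.adj.nrm F₀ E₀ S * ‖A₀‖ ≤
        c * ‖B‖ * A.conj.nrm F₀ E₀ S * ‖A₀‖ :=
      mul_le_mul_of_nonneg_right
        (mul_le_mul_of_nonneg_left hle (mul_nonneg hc0 (norm_nonneg _)))
        (norm_nonneg _)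
    exact le_trans hmain hchain

lemma OperatorIdeal.ext' {X Y : OperatorIdeal.{u}} (h1 : X.mem = Y.mem)
    (h2 : X.nrm = Y.nrm) : X = Y := by
  cases X; cases Y
  cases h1; cases h2
  rfl

/-- `(A^Δ)* = (A*)*` for a left accessible Banach ideal. -/
lemma conj_adj_eq_adj_adj (A : OperatorIdeal.{u}) (hA : IsPBanachIdeal 1 A)
    (hla : LeftAccessible A) : (A.conj).adj = (A.adj).adj := by
  apply OperatorIdeal.ext'
  · funext E F T
    have h := Set.ext_iff.mp (adjSet_conj_eq_adjSet_adj A hA hla T)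
    exact propext (exists_congr fun c => h c)
  · funext E F T
    exact congrArg sInf (adjSet_conj_eq_adjSet_adj A hA hla T)

end AuxLemmas

/-- for a left accessible Banach ideal `A`, the `A^Δ`-LRP holds iff the
`A*`-LRP holds. -/
theorem conj_lrp_iff_adj_lrp (A : OperatorIdeal.{u}) (hA : IsPBanachIdeal 1 A)
    (hla : LeftAccessible A) :
    LRPholds A.conj ↔ LRPholds A.adj := by
  have hadj2 : (A.conj).adj = (A.adj).adj := conj_adj_eq_adj_adj A hA hla
  constructor
  · intro h M F hM N hN T ε hε
    obtain ⟨S, h1, h2, h3⟩ := h M F hM N hN T ε hε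
    refine ⟨S, ?_, h2, h3⟩
    rw [← conj_nrm_eq_adj_nrm A hA hla hM S, ← hadj2]
    exact h1
  · intro h M F hM N hN T ε hε
    obtain ⟨S, h1, h2, h3⟩ := h M F hM N hN T ε hε
    refine ⟨S, ?_, h2, h3⟩
    rw [conj_nrm_eq_adj_nrm A hA hla hM S, hadj2]
    exact h1
end
end
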